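/- Let I ⊆ ℝ be an open interval, c ∈ ℝ, f : ℝ → ℝ twice differentiable on I with f(t) > 0 on I, λ : ℝ → ℝ differentiable on I with λ(t) ≠ 0 on I, satisfying f(t)²λ(t)² + f'(t)² = c for all t ∈ I. Let θ : ℝ → ℝ be differentiable on I with cos(θ(t)) ≠ 0 and tan(θ(t)) = f'(t)/(f(t)·λ(t)) for all t ∈ I. Then the function t ↦ cos(θ(t))/λ(t) is differentiable on I and its derivative equals sin(θ(t)) for all t ∈ I. -/

import Mathlib

/-- With `f²λ² + f'² = c` on the open interval `I` (`f > 0`, `λ ≠ 0`,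
`λ` differentiable) and `tan θ = f'/(f·λ)`, `cos θ ≠ 0`, the function `cos θ/λ` is
differentiable on `I` with derivative `sin θ`. -/
theorem stmt_9 (a b c : ℝ) (f f' f'' lam θ : ℝ → ℝ)
    (hf : ∀ t ∈ Set.Ioo a b, HasDerivAt f (f' t) t)
    (hf' : ∀ t ∈ Set.Ioo a b, HasDerivAt f' (f'' t) t)
    (hpos : ∀ t ∈ Set.Ioo a b, 0 < f t)
    (hlamdiff : ∀ t ∈ Set.Ioo a b, DifferentiableAt ℝ lam t)
    (hlam0 : ∀ t ∈ Set.Ioo a b, lam t ≠ 0)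
    (hrel : ∀ t ∈ Set.Ioo a b, f t ^ 2 * lam t ^ 2 + f' t ^ 2 = c)
    (hθdiff : ∀ t ∈ Set.Ioo a b, DifferentiableAt ℝ θ t)
    (hcos : ∀ t ∈ Set.Ioo a b, Real.cos (θ t) ≠ 0)
    (htan : ∀ t ∈ Set.Ioo a b, Real.tan (θ t) = f' t / (f t * lam t)) :
    ∀ t ∈ Set.Ioo a b,
      HasDerivAt (fun s => Real.cos (θ s) / lam s) (Real.sin (θ t)) t := by
  intro t ht
  have hmem : Set.Ioo a b ∈ nhds t := isOpen_Ioo.mem_nhds ht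
  -- sin * (f λ) = f' * cos
  have h1 : ∀ s ∈ Set.Ioo a b,
      Real.sin (θ s) * (f s * lam s) = f' s * Real.cos (θ s) := by
    intro s hs
    have htan' := htan s hs
    rw [Real.tan_eq_sin_div_cos] at htan'
    have hfl : f s * lam s ≠ 0 := mul_ne_zero (hpos s hs).ne' (hlam0 s hs)
    exact (div_eq_div_iff (hcos s hs) hfl).mp htan'
  -- cos² * c = f² λ²
  have key : ∀ s ∈ Set.Ioo a b,
      Real.cos (θ s) ^ 2 * c = f s ^ 2 * lam s ^ 2 := by
    intro s hs
    have h2 := h1 s hs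
    have h3 := hrel s hs
    have h4 := Real.sin_sq_add_cos_sq (θ s)
    linear_combination (-Real.cos (θ s) ^ 2) * h3
      - (Real.sin (θ s) * (f s * lam s) + f' s * Real.cos (θ s)) * h2
      + f s ^ 2 * lam s ^ 2 * h4
  have hc : c ≠ 0 := by
    intro h0
    have hk := key t ht
    rw [h0, mul_zero] at hk
    have : f t ^ 2 * lam t ^ 2 ≠ 0 :=
      mul_ne_zero (pow_ne_zero 2 (hpos t ht).ne') (pow_ne_zero 2 (hlam0 t ht))
    exact this hk.symm
  -- differentiability of g = cos θ / λ
  have hg : DifferentiableAt ℝ (fun s => Real.cos (θ s) / lam s) t :=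
    ((hθdiff t ht).cos).div (hlamdiff t ht) (hlam0 t ht)
  set d := deriv (fun s => Real.cos (θ s) / lam s) t with hd_def
  have hd : HasDerivAt (fun s => Real.cos (θ s) / lam s) d t := hg.hasDerivAt
  -- derivative of g² two ways
  have hsq1 : HasDerivAt (fun s => (Real.cos (θ s) / lam s) ^ 2)
      (2 * (Real.cos (θ t) / lam t) ^ 1 * d) t := hd.pow 2
  have heq : (fun s => (Real.cos (θ s) / lam s) ^ 2)
      =ᶠ[nhds t] fun s => f s ^ 2 / c := by
    filter_upwards [hmem] with s hs
    have hk := key s hs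
    rw [div_pow, div_eq_div_iff (pow_ne_zero 2 (hlam0 s hs)) hc]
    linarith [hk]
  have hsq2 : HasDerivAt (fun s => f s ^ 2 / c) ((2 * f t ^ 1 * f' t) / c) t :=
    ((hf t ht).pow 2).div_const c
  have hsq2' : HasDerivAt (fun s => (Real.cos (θ s) / lam s) ^ 2)
      ((2 * f t ^ 1 * f' t) / c) t := hsq2.congr_of_eventuallyEq heq
  have huniq := hsq1.unique hsq2'
  -- solve for d
  have hg0 : Real.cos (θ t) / lam t ≠ 0 := div_ne_zero (hcos t ht) (hlam0 t ht)
  have hdval : d = Real.sin (θ t) := by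
    have hk := key t ht
    have hs1 := h1 t ht
    have hlam := hlam0 t ht
    have hfne := (hpos t ht).ne'
    have hcosne := hcos t ht
    field_simp at huniq
    have h5 : (Real.sin (θ t) * Real.cos (θ t) * c - f' t * f t * lam t)
        * (f t * lam t) = 0 := by
      linear_combination Real.cos (θ t) * c * hs1 + f' t * hk
    have h6 : Real.sin (θ t) * Real.cos (θ t) * c = f' t * f t * lam t := by
      have hfl : f t * lam t ≠ 0 := mul_ne_zero hfne hlam
      have := mul_eq_zero.mp h5
      rcases this with h | h
      · linarith
      · exact absurd h hfl
    have hcc : 2 * Real.cos (θ t) * c ≠ 0 := by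
      have : Real.cos (θ t) * c ≠ 0 := mul_ne_zero hcosne hc
      simpa [mul_assoc] using mul_ne_zero (two_ne_zero (α := ℝ)) this
    have h7 : d * (2 * Real.cos (θ t) * c) = Real.sin (θ t) * (2 * Real.cos (θ t) * c) := by
      linear_combination 2 * huniq - 2 * h6
    exact mul_right_cancel₀ hcc h7
  rw [← hdval]
  exact hd
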